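/- Let λ, μ be partitions with at most d+1 and e+1 parts respectively, where d, e ≥ 0. If P^d_λ(q) = P^e_μ(q) as rational functions, then |λ|·d - |μ|·e is even. -/
import Mathlib


/-- The transpose (conjugate) partition: `λᵗ_j = #{i < N : λ_i > j}` (0-indexed),
for a partition `l` supported on indices `< N`. -/
def conj (l : ℕ → ℕ) (N : ℕ) : ℕ → ℕ := fun j => ((Finset.range N).filter fun i => j < l i).card

/-- The boxes `(i, j)` (0-indexed) of the Young diagram of `l` (with `l` antitone
and supported on indices `< N`, so all columns are `< l 0`). -/
def boxes (l : ℕ → ℕ) (N : ℕ) : Finset (ℕ × ℕ) :=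
  (Finset.range N ×ˢ Finset.range (l 0)).filter fun p => p.2 < l p.1

/-- The hook length of the (0-indexed) box `(i, j)`:
`(λ_i - 1 - j) + (λᵗ_j - 1 - i) + 1`. -/
def hook (l : ℕ → ℕ) (N i j : ℕ) : ℕ := (l i - 1 - j) + (conj l N j - 1 - i) + 1

/-- The `q`-analog `[a]_t = 1 + t + ⋯ + t^{a-1}`, evaluated at `t ∈ ℚ(q)`. -/
noncomputable def qv (t : RatFunc ℚ) (a : ℕ) : RatFunc ℚ := ∑ i ∈ Finset.range a, t ^ i

/-- `|λ| = Σ λ_i`, the size of the partition. -/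
def psize (l : ℕ → ℕ) (N : ℕ) : ℕ := ∑ i ∈ Finset.range N, l i

/-- `b(λ) = Σ_i (i-1)λ_i` (1-indexed), i.e. `Σ_i i·λ_i` with 0-indexing. -/
def bsum (l : ℕ → ℕ) (N : ℕ) : ℕ := ∑ i ∈ Finset.range N, i * l i

/-- The hook-content ratio `P^d_λ(t) = ∏_{u∈Y(λ)} [d+1+c(u)]_t / ∏_{u∈Y(λ)} [h(u)]_t`,
where `c(i,j) = j - i` is the content (so `d+1+c(u) = d+1+j-i` in `ℕ`), evaluated
at `t ∈ ℚ(q)`. -/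
noncomputable def Pt (l : ℕ → ℕ) (N d : ℕ) (t : RatFunc ℚ) : RatFunc ℚ :=
  (∏ p ∈ boxes l N, qv t (d + 1 + p.2 - p.1)) /
  (∏ p ∈ boxes l N, qv t (hook l N p.1 p.2))

/-- `P^d_λ(q)` as a rational function in `q`. -/
noncomputable def Pq (l : ℕ → ℕ) (N d : ℕ) : RatFunc ℚ := Pt l N d RatFunc.X


open Finset

/-- geometric polynomial -/
noncomputable def gp (a : ℕ) : Polynomial ℚ := ∑ i ∈ Finset.range a, Polynomial.X ^ i

lemma gp_ne_zero {a : ℕ} (ha : 0 < a) : gp a ≠ 0 := by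
  intro h
  have h1 := congrArg (Polynomial.eval 1) h
  simp [gp, Polynomial.eval_finset_sum] at h1
  omega

lemma gp_natDegree {a : ℕ} (ha : 0 < a) : (gp a).natDegree = a - 1 := by
  apply le_antisymm
  · apply Polynomial.natDegree_sum_le_of_forall_le
    intro i hi
    simp only [Polynomial.natDegree_X_pow]
    exact Nat.le_sub_one_of_lt (mem_range.mp hi)
  · apply Polynomial.le_natDegree_of_ne_zero
    rw [gp, Polynomial.finset_sum_coeff]
    have : ∀ i ∈ Finset.range a, (Polynomial.X ^ i : Polynomial ℚ).coeff (a-1)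
        = if i = a - 1 then 1 else 0 := by
      intro i hi; rw [Polynomial.coeff_X_pow]
      simp [eq_comm]
    rw [Finset.sum_congr rfl this, Finset.sum_ite_eq' (Finset.range a) (a-1) (fun _ => (1:ℚ))]
    simp [Nat.sub_lt ha]

lemma qv_eq (a : ℕ) : qv RatFunc.X a = algebraMap (Polynomial ℚ) (RatFunc ℚ) (gp a) := by
  simp [qv, gp, map_sum, map_pow, RatFunc.algebraMap_X]

lemma qv_ne_zero {a : ℕ} (ha : 0 < a) : qv RatFunc.X a ≠ 0 := by
  rw [qv_eq]; exact RatFunc.algebraMap_ne_zero (gp_ne_zero ha)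

lemma qv_intDegree {a : ℕ} (ha : 0 < a) : (qv RatFunc.X a).intDegree = (a : ℤ) - 1 := by
  rw [qv_eq, RatFunc.intDegree_polynomial, gp_natDegree ha]
  omega

lemma intDegree_prod {ι : Type*} (s : Finset ι) (f : ι → RatFunc ℚ)
    (h : ∀ i ∈ s, f i ≠ 0) :
    (∏ i ∈ s, f i).intDegree = ∑ i ∈ s, (f i).intDegree := by
  induction s using Finset.cons_induction with
  | empty => simp [RatFunc.intDegree_one]
  | cons a s ha ih =>
      rw [Finset.prod_cons, Finset.sum_cons,
        RatFunc.intDegree_mul (h a (Finset.mem_cons_self a s))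
          (Finset.prod_ne_zero_iff.mpr fun i hi => h i (Finset.mem_cons_of_mem hi)),
        ih fun i hi => h i (Finset.mem_cons_of_mem hi)]

lemma intDegree_div (f g : RatFunc ℚ) (hf : f ≠ 0) (hg : g ≠ 0) :
    (f / g).intDegree = f.intDegree - g.intDegree := by
  have h1 : f / g * g = f := div_mul_cancel₀ f hg
  have h2 := RatFunc.intDegree_mul (div_ne_zero hf hg) hg
  rw [h1] at h2
  omega
lemma mem_boxes {l : ℕ → ℕ} {N : ℕ} {p : ℕ × ℕ} (hl : Antitone l) :
    p ∈ boxes l N ↔ p.1 < N ∧ p.2 < l p.1 := by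
  simp only [boxes, Finset.mem_filter, Finset.mem_product, Finset.mem_range]
  constructor
  · rintro ⟨⟨h1, _⟩, h3⟩; exact ⟨h1, h3⟩
  · rintro ⟨h1, h3⟩
    exact ⟨⟨h1, lt_of_lt_of_le h3 (hl (Nat.zero_le p.1))⟩, h3⟩

lemma conj_ge {l : ℕ → ℕ} {N i j : ℕ} (hl : Antitone l) (hi : i < N) (hj : j < l i) :
    i + 1 ≤ conj l N j := by
  have hsub : Finset.range (i + 1) ⊆ (Finset.range N).filter fun k => j < l k := by
    intro k hk
    simp only [Finset.mem_range] at hk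
    simp only [Finset.mem_filter, Finset.mem_range]
    exact ⟨by omega, lt_of_lt_of_le hj (hl (Nat.lt_succ_iff.mp hk))⟩
  calc i + 1 = (Finset.range (i+1)).card := by simp
    _ ≤ _ := Finset.card_le_card hsub

lemma sum_boxes {M : Type*} [AddCommMonoid M] (l : ℕ → ℕ) (N : ℕ) (hl : Antitone l)
    (f : ℕ × ℕ → M) :
    ∑ p ∈ boxes l N, f p = ∑ i ∈ Finset.range N, ∑ j ∈ Finset.range (l i), f (i, j) := by
  rw [boxes, Finset.sum_filter, Finset.sum_product]
  refine Finset.sum_congr rfl fun i hi => ?_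
  rw [← Finset.sum_filter]
  congr 1
  ext j
  simp only [Finset.mem_filter, Finset.mem_range]
  have := hl (Nat.zero_le i)
  omega

lemma sum_boxes_col {M : Type*} [AddCommMonoid M] (l : ℕ → ℕ) (N : ℕ) (g : ℕ → M) :
    ∑ p ∈ boxes l N, g p.2
      = ∑ j ∈ Finset.range (l 0), (conj l N j) • g j := by
  rw [boxes, Finset.sum_filter, Finset.sum_product_right]
  refine Finset.sum_congr rfl fun j hj => ?_
  rw [← Finset.sum_filter]
  simp only []
  rw [Finset.sum_const, conj]
lemma even_sq_sub (x : ℤ) : Even (x * x - x) := by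
  rcases Int.even_or_odd x with ⟨k, hk⟩ | ⟨k, hk⟩
  · exact ⟨2 * k * k - k, by rw [hk]; ring⟩
  · exact ⟨2 * k * k + k, by rw [hk]; ring⟩

lemma deg_parity (d : ℕ) (l : ℕ → ℕ) (hl : Antitone l) :
    Even ((Pq l (d + 1) d).intDegree - (psize l (d + 1) : ℤ) * d) := by
  set N := d + 1 with hN
  -- positivity of qv arguments
  have hnum : ∀ p ∈ boxes l N, 0 < d + 1 + p.2 - p.1 := by
    intro p hp
    have := (mem_boxes hl).mp hp
    omega
  have hden : ∀ p ∈ boxes l N, 0 < hook l N p.1 p.2 := by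
    intro p _; simp [hook]
  have hnumne : ∀ p ∈ boxes l N, qv RatFunc.X (d + 1 + p.2 - p.1) ≠ 0 :=
    fun p hp => qv_ne_zero (hnum p hp)
  have hdenne : ∀ p ∈ boxes l N, qv RatFunc.X (hook l N p.1 p.2) ≠ 0 :=
    fun p hp => qv_ne_zero (hden p hp)
  have hD : (Pq l N d).intDegree
      = ∑ p ∈ boxes l N, ((d + 1 + p.2 - p.1 : ℕ) - 1 : ℤ)
        - ∑ p ∈ boxes l N, ((hook l N p.1 p.2 : ℕ) - 1 : ℤ) := by
    rw [Pq, Pt, intDegree_div _ _ (Finset.prod_ne_zero_iff.mpr hnumne)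
        (Finset.prod_ne_zero_iff.mpr hdenne),
      intDegree_prod _ _ hnumne, intDegree_prod _ _ hdenne]
    rw [Finset.sum_congr rfl fun p hp => qv_intDegree (hnum p hp),
      Finset.sum_congr rfl fun p hp => qv_intDegree (hden p hp)]
  -- per-box simplification
  have hterm : ∀ p ∈ boxes l N,
      ((d + 1 + p.2 - p.1 : ℕ) - 1 : ℤ) - ((hook l N p.1 p.2 : ℕ) - 1 : ℤ)
        = (d : ℤ) + (2 * p.2 + 2) - (l p.1 : ℤ) - (conj l N p.2 : ℤ) := by
    intro p hp
    obtain ⟨h1, h2⟩ := (mem_boxes hl).mp hp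
    have h3 := conj_ge hl h1 h2
    simp only [hook]
    omega
  have hD2 : (Pq l N d).intDegree
      = ∑ p ∈ boxes l N,
          ((d : ℤ) + (2 * p.2 + 2) - (l p.1 : ℤ) - (conj l N p.2 : ℤ)) := by
    rw [hD, ← Finset.sum_sub_distrib]
    exact Finset.sum_congr rfl hterm
  -- the individual sums
  have hcard : ∑ p ∈ boxes l N, (1 : ℤ) = (psize l N : ℤ) := by
    rw [sum_boxes l N hl, psize]
    push_cast
    simp
  have hX2 : ∑ p ∈ boxes l N, (l p.1 : ℤ)
      = ∑ i ∈ Finset.range N, (l i : ℤ) * (l i : ℤ) := by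
    rw [sum_boxes l N hl (fun p => (l p.1 : ℤ))]
    simp [mul_comm]
  have hX3 : ∑ p ∈ boxes l N, (conj l N p.2 : ℤ)
      = ∑ j ∈ Finset.range (l 0), (conj l N j : ℤ) * (conj l N j : ℤ) := by
    rw [sum_boxes_col l N (fun j => (conj l N j : ℤ))]
    refine Finset.sum_congr rfl fun j _ => ?_
    rw [nsmul_eq_mul]
  have hS' : ∑ j ∈ Finset.range (l 0), (conj l N j : ℤ) = (psize l N : ℤ) := by
    have h := sum_boxes_col l N (fun _ => (1 : ℤ))
    rw [hcard] at h
    rw [h]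
    refine Finset.sum_congr rfl fun j _ => ?_
    rw [nsmul_eq_mul, mul_one]
  have hS : ∑ i ∈ Finset.range N, (l i : ℤ) = (psize l N : ℤ) := by
    rw [psize]; push_cast; ring
  have hdsum : ∑ p ∈ boxes l N, (d : ℤ) = (psize l N : ℤ) * d := by
    rw [Finset.sum_const, ← hcard, Finset.sum_const]
    push_cast; ring
  -- assemble
  have key : (Pq l N d).intDegree - (psize l N : ℤ) * d
      = ∑ p ∈ boxes l N, (2 * (p.2 : ℤ) + 2)
        - ((∑ i ∈ Finset.range N, ((l i : ℤ) * l i - l i))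
          + (∑ j ∈ Finset.range (l 0), ((conj l N j : ℤ) * conj l N j - conj l N j))
          + 2 * (psize l N : ℤ)) := by
    rw [Finset.sum_sub_distrib, Finset.sum_sub_distrib, hS, hS', ← hX2, ← hX3]
    rw [hD2]
    rw [show (∑ p ∈ boxes l N,
          ((d : ℤ) + (2 * p.2 + 2) - (l p.1 : ℤ) - (conj l N p.2 : ℤ)))
        = ∑ p ∈ boxes l N, (d : ℤ)
          + ∑ p ∈ boxes l N, (2 * (p.2 : ℤ) + 2)
          - ∑ p ∈ boxes l N, (l p.1 : ℤ)
          - ∑ p ∈ boxes l N, (conj l N p.2 : ℤ) by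
      rw [← Finset.sum_add_distrib, ← Finset.sum_sub_distrib, ← Finset.sum_sub_distrib]]
    rw [hdsum]
    ring
  rw [key]
  refine Even.sub ?_ (Even.add (Even.add ?_ ?_) (even_two_mul _))
  · exact Finset.even_sum _ fun p _ => ⟨(p.2 : ℤ) + 1, by ring⟩
  · exact Finset.even_sum _ fun i _ => even_sq_sub _
  · exact Finset.even_sum _ fun j _ => even_sq_sub _
/-- If `λ`, `μ` are partitions with at most `d+1` and `e+1` parts and
`P^d_λ(q) = P^e_μ(q)` as rational functions, then `|λ|·d - |μ|·e` is even. -/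
theorem P_eq_parity (d e : ℕ) (l m : ℕ → ℕ) (hl : Antitone l) (hm : Antitone m)
    (h0l : l (d + 1) = 0) (h0m : m (e + 1) = 0)
    (hP : Pq l (d + 1) d = Pq m (e + 1) e) :
    Even ((psize l (d + 1) : ℤ) * d - (psize m (e + 1) : ℤ) * e) := by
  have e1 := deg_parity d l hl
  have e2 := deg_parity e m hm
  have hdeg : (Pq l (d + 1) d).intDegree = (Pq m (e + 1) e).intDegree := by rw [hP]
  have key : (psize l (d + 1) : ℤ) * d - (psize m (e + 1) : ℤ) * e
      = ((Pq m (e + 1) e).intDegree - (psize m (e + 1) : ℤ) * e)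
        - ((Pq l (d + 1) d).intDegree - (psize l (d + 1) : ℤ) * d) := by
    rw [hdeg]; ring
  rw [key]
  exact e2.sub e1
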